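/- Let L be the Laplacian matrix of a connected weighted undirected graph on n ≥ 2 vertices and let B := L + J. Then B is invertible with B^{-1} = L† + (1/n²)J, and for all vertices u, v: (B^{-1})_{uu} + (B^{-1})_{vv} − 2(B^{-1})_{uv} = R_{uv}. Consequently, the information centrality I_v := n / (Σ_u ((B^{-1})_{uu} + (B^{-1})_{vv} − 2(B^{-1})_{uv})) of any vertex v equals n / R_v. -/

import Mathlib

open Matrix

/-- For the Laplacian `L` of a connected weighted undirected graph on `n ≥ 2`
vertices and `B := L + J`, the matrix `B` is invertible with `B⁻¹ = L† + (1/n²)J`, for all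
vertices `u, v` we have `(B⁻¹)_{uu} + (B⁻¹)_{vv} − 2(B⁻¹)_{uv} = R_{uv}`, and consequently
the information centrality `I_v = n / Σ_u ((B⁻¹)_{uu} + (B⁻¹)_{vv} − 2(B⁻¹)_{uv})` equals
`n / R_v`. -/
theorem information_centrality_eq {n : ℕ} (hn : 2 ≤ n)
    (L : Matrix (Fin n) (Fin n) ℝ)
    (hsym : L.IsSymm)
    (hoff : ∀ i j : Fin n, i ≠ j → L i j ≤ 0)
    (hrow : ∀ i : Fin n, ∑ j, L i j = 0)
    (hker : ∀ x : Fin n → ℝ, L *ᵥ x = 0 ↔ ∃ c : ℝ, x = fun _ => c)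
    (J : Matrix (Fin n) (Fin n) ℝ) (hJ : J = of fun _ _ => (1 : ℝ))
    (Ldag : Matrix (Fin n) (Fin n) ℝ)
    (hLdag : Ldag = (L + (n : ℝ)⁻¹ • J)⁻¹ - (n : ℝ)⁻¹ • J)
    (B : Matrix (Fin n) (Fin n) ℝ) (hB : B = L + J) :
    IsUnit B ∧
    B⁻¹ = Ldag + ((n : ℝ) ^ 2)⁻¹ • J ∧
    (∀ u v : Fin n, B⁻¹ u u + B⁻¹ v v - 2 * B⁻¹ u v =
      (Pi.single u 1 - Pi.single v 1) ⬝ᵥ (Ldag *ᵥ (Pi.single u 1 - Pi.single v 1))) ∧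
    (∀ v : Fin n,
      (n : ℝ) / (∑ u : Fin n, (B⁻¹ u u + B⁻¹ v v - 2 * B⁻¹ u v)) =
      (n : ℝ) / (∑ u : Fin n, (Pi.single u 1 - Pi.single v 1) ⬝ᵥ
        (Ldag *ᵥ (Pi.single u 1 - Pi.single v 1)))) := by
  have hn0 : (n:ℝ) ≠ 0 := by positivity
  set M : Matrix (Fin n) (Fin n) ℝ := L + (n : ℝ)⁻¹ • J with hM
  -- basic multiplication facts
  have hcol : ∀ j : Fin n, ∑ i, L i j = 0 := by
    intro j
    calc ∑ i, L i j = ∑ i, L j i := by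
          refine Finset.sum_congr rfl fun i _ => Matrix.IsSymm.apply hsym j i
      _ = 0 := hrow j
  have hLJ : L * J = 0 := by
    ext i j
    simp [hJ, Matrix.mul_apply, hrow i]
  have hJL : J * L = 0 := by
    ext i j
    simp [hJ, Matrix.mul_apply, hcol j]
  have hJJ : J * J = (n : ℝ) • J := by
    ext i j
    simp [hJ, Matrix.mul_apply]
  -- M is invertible
  have hMunit : IsUnit M := by
    rw [← Matrix.mulVec_injective_iff_isUnit]
    intro x y hxy
    have key : ∀ z : Fin n → ℝ, M *ᵥ z = 0 → z = 0 := by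
      intro z hz
      have hJz : ∀ i, (J *ᵥ z) i = ∑ j, z j := by
        intro i; simp [hJ, Matrix.mulVec, dotProduct]
      have hsum : ∑ i, (M *ᵥ z) i = (∑ j, z j) := by
        simp only [hM, Matrix.add_mulVec, Matrix.smul_mulVec, Pi.add_apply, Pi.smul_apply,
          smul_eq_mul, Finset.sum_add_distrib]
        have h1 : ∑ i, (L *ᵥ z) i = 0 := by
          simp only [Matrix.mulVec, dotProduct]
          rw [Finset.sum_comm]
          refine Finset.sum_eq_zero fun j _ => ?_
          rw [← Finset.sum_mul, hcol j, zero_mul]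
        rw [h1, zero_add]
        simp only [hJz]
        rw [Finset.sum_const, Finset.card_univ, Fintype.card_fin, nsmul_eq_mul]
        field_simp
      rw [hz] at hsum
      simp at hsum
      have hLz : L *ᵥ z = 0 := by
        have h := hz
        rw [hM, Matrix.add_mulVec, Matrix.smul_mulVec] at h
        have hJz0 : J *ᵥ z = 0 := by
          funext i; rw [hJz]; simpa using hsum.symm
        rw [hJz0, smul_zero, add_zero] at h
        exact h
      obtain ⟨c, hc⟩ := (hker z).1 hLz
      have hnc : (n:ℝ) * c = 0 := by
        rw [hc] at hsum
        simpa [Finset.sum_const, Finset.card_univ] using hsum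
      have hc0 : c = 0 := by
        rcases mul_eq_zero.1 hnc with h | h
        · exact absurd h hn0
        · exact h
      rw [hc, hc0]; rfl
    have := key (x - y) (by rw [Matrix.mulVec_sub, hxy, sub_self])
    exact sub_eq_zero.1 this
  have hMM : M * M⁻¹ = 1 := Matrix.mul_nonsing_inv _ (Matrix.isUnit_iff_isUnit_det M |>.1 hMunit)
  have hMM' : M⁻¹ * M = 1 := Matrix.nonsing_inv_mul _ (Matrix.isUnit_iff_isUnit_det M |>.1 hMunit)
  have hMJ : M * J = J := by
    rw [hM, Matrix.add_mul, hLJ, Matrix.smul_mul, hJJ, smul_smul, inv_mul_cancel₀ hn0,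
      one_smul, zero_add]
  have hJM : J * M = J := by
    rw [hM, Matrix.mul_add, hJL, Matrix.mul_smul, hJJ, smul_smul, inv_mul_cancel₀ hn0,
      one_smul, zero_add]
  have hJK : J * M⁻¹ = J := by
    calc J * M⁻¹ = (J * M) * M⁻¹ := by rw [hJM]
      _ = J * (M * M⁻¹) := by rw [Matrix.mul_assoc]
      _ = J := by rw [hMM, Matrix.mul_one]
  have hKJ : M⁻¹ * J = J := by
    calc M⁻¹ * J = M⁻¹ * (M * J) := by rw [hMJ]
      _ = (M⁻¹ * M) * J := by rw [Matrix.mul_assoc]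
      _ = J := by rw [hMM', Matrix.one_mul]
  have hLM : L = M - (n:ℝ)⁻¹ • J := by rw [hM]; abel
  have hLK : L * M⁻¹ = 1 - (n:ℝ)⁻¹ • J := by
    rw [hLM, Matrix.sub_mul, hMM, Matrix.smul_mul, hJK]
  have hKL : M⁻¹ * L = 1 - (n:ℝ)⁻¹ • J := by
    rw [hLM, Matrix.mul_sub, hMM', Matrix.mul_smul, hKJ]
  set C : Matrix (Fin n) (Fin n) ℝ := Ldag + ((n : ℝ) ^ 2)⁻¹ • J with hC
  have hCval : C = M⁻¹ - (n:ℝ)⁻¹ • J + ((n : ℝ) ^ 2)⁻¹ • J := by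
    rw [hC, hLdag]
  have h1 : ((n:ℝ)^2)⁻¹ * (n:ℝ) = (n:ℝ)⁻¹ := by field_simp
  have h2 : (n:ℝ)⁻¹ * (n:ℝ) = 1 := inv_mul_cancel₀ hn0
  have hBC : B * C = 1 := by
    rw [hB, hCval]
    simp only [Matrix.add_mul, Matrix.mul_add, Matrix.sub_mul, Matrix.mul_sub,
      Matrix.mul_smul, Matrix.smul_mul, hLK, hLJ, hJK, hJJ, smul_zero, smul_smul]
    match_scalars <;> field_simp <;> ring
  have hCB : C * B = 1 := by
    rw [hB, hCval]
    simp only [Matrix.add_mul, Matrix.mul_add, Matrix.sub_mul, Matrix.mul_sub,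
      Matrix.mul_smul, Matrix.smul_mul, hKL, hKJ, hJL, hJJ, smul_zero, smul_smul]
    match_scalars <;> field_simp <;> ring
  have hBunit : IsUnit B := (Matrix.isUnit_iff_isUnit_det B).2 (Matrix.isUnit_det_of_right_inverse hBC)
  have hBinv : B⁻¹ = C := Matrix.inv_eq_right_inv hBC
  -- symmetry of M⁻¹ and of Ldag
  have hMsym : Mᵀ = M := by
    rw [hM, Matrix.transpose_add, Matrix.transpose_smul, hsym]
    congr 1
    · congr 1
      ext i j; simp [hJ]
  have hKsym : (M⁻¹)ᵀ = M⁻¹ := by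
    rw [Matrix.transpose_nonsing_inv, hMsym]
  have hKe : ∀ u v : Fin n, M⁻¹ u v = M⁻¹ v u := by
    intro u v
    have := congrFun (congrFun hKsym v) u
    simpa [Matrix.transpose_apply] using this
  have hLdagSym : ∀ u v, Ldag u v = Ldag v u := by
    intro u v
    rw [hLdag]
    simp only [Matrix.sub_apply, Matrix.smul_apply, smul_eq_mul, hJ, Matrix.of_apply]
    rw [hKe u v]
  -- entrywise quadratic form
  have hquad : ∀ u v : Fin n, B⁻¹ u u + B⁻¹ v v - 2 * B⁻¹ u v =
      (Pi.single u 1 - Pi.single v 1) ⬝ᵥ (Ldag *ᵥ (Pi.single u 1 - Pi.single v 1)) := by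
    intro u v
    have hdot : (Pi.single u 1 - Pi.single v 1) ⬝ᵥ (Ldag *ᵥ (Pi.single u 1 - Pi.single v 1))
        = Ldag u u - Ldag u v - Ldag v u + Ldag v v := by
      simp [dotProduct, Matrix.mulVec, Pi.sub_apply, Pi.single_apply, sub_mul, mul_sub,
        Finset.sum_sub_distrib, ite_mul, mul_ite]
      ring
    rw [hdot, hBinv, ← hLdagSym u v]
    simp only [hC, Matrix.add_apply, Pi.smul_apply, Matrix.smul_apply, smul_eq_mul, hJ]
    simp only [Matrix.of_apply]
    ring
  refine ⟨hBunit, hBinv, hquad, fun v => ?_⟩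
  congr 1
  exact Finset.sum_congr rfl fun u _ => hquad u v
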